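/- With L = min(N_e, N), the following lower bound on the multi-antenna-eavesdropper secrecy value holds: sup over Hermitian PSD matrices S with tr(S) ≤ P of [ min over i = 1,…,K of ( log det(I + H_sᴴ S H_s) − log det(I + H_iᴴ S H_i) ) ] is greater than or equal to sup over vectors Γ = (Γ_1,…,Γ_K) with Γ_i ≥ 0 of [ min over i = 1,…,K of log( g̃(Γ_1,…,Γ_K)/(1 + Γ_i/L)^L ) ]. -/

import Mathlib

open Matrix ComplexOrder

/-- The (real) value `det(I + Hᴴ S H)`. -/
noncomputable def detVal {N M : ℕ} (H : Matrix (Fin N) (Fin M) ℂ)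
    (S : Matrix (Fin N) (Fin N) ℂ) : ℝ :=
  ((1 + H.conjTranspose * S * H).det).re

/-- `g̃(Γ₁,…,Γ_K)`: the optimal value of the CR problem with trace-type IT constraints. -/
noncomputable def gTilde {N M K Ne : ℕ} (Hs : Matrix (Fin N) (Fin M) ℂ)
    (H : Fin K → Matrix (Fin N) (Fin Ne) ℂ) (P : ℝ) (Γ : Fin K → ℝ) : ℝ :=
  sSup {x : ℝ | ∃ S : Matrix (Fin N) (Fin N) ℂ, S.PosSemidef ∧ S.trace.re ≤ P ∧
    (∀ i, (((H i).conjTranspose * S * (H i)).trace).re ≤ Γ i) ∧ x = detVal Hs S}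

section Aux

variable {n m : ℕ}

/-- Diagonal entries of a PSD complex matrix have nonneg real part. -/
lemma psd_diag_re_nonneg {A : Matrix (Fin n) (Fin n) ℂ} (hA : A.PosSemidef) (i : Fin n) :
    0 ≤ (A i i).re := by
  have h := hA.re_dotProduct_nonneg (Pi.single i 1)
  have he : star (Pi.single i (1 : ℂ)) ⬝ᵥ A *ᵥ Pi.single i 1 = A i i := by
    simp [dotProduct, mulVec, Pi.single_apply, Finset.mul_sum, apply_ite, mul_comm]
  rwa [he] at h

lemma psd_trace_re_eq_sum {A : Matrix (Fin n) (Fin n) ℂ} :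
    A.trace.re = ∑ i, (A i i).re := by
  simp [Matrix.trace, Matrix.diag, Complex.re_sum]

lemma psd_trace_re_nonneg {A : Matrix (Fin n) (Fin n) ℂ} (hA : A.PosSemidef) :
    0 ≤ A.trace.re := by
  rw [psd_trace_re_eq_sum]
  exact Finset.sum_nonneg fun i _ => psd_diag_re_nonneg hA i

lemma psd_diag_re_le_trace {A : Matrix (Fin n) (Fin n) ℂ} (hA : A.PosSemidef) (i : Fin n) :
    (A i i).re ≤ A.trace.re := by
  rw [psd_trace_re_eq_sum]
  exact Finset.single_le_sum (fun j _ => psd_diag_re_nonneg hA j) (Finset.mem_univ i)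

lemma re_det_one_add_eq {A : Matrix (Fin n) (Fin n) ℂ} (hA : A.PosSemidef) :
    ((1 + A).det).re = ∏ i, (1 + hA.1.eigenvalues i) := by
  classical
  set U : Matrix (Fin n) (Fin n) ℂ := (hA.1.eigenvectorUnitary : Matrix (Fin n) (Fin n) ℂ) with hU
  have hU1 : U * star U = 1 := mem_unitaryGroup_iff.mp hA.1.eigenvectorUnitary.2
  have hU2 : star U * U = 1 := mem_unitaryGroup_iff'.mp hA.1.eigenvectorUnitary.2
  have hdiag : star U * A * U = diagonal (RCLike.ofReal ∘ hA.1.eigenvalues) :=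
    by have := hA.1.conjStarAlgAut_star_eigenvectorUnitary
       rw [Unitary.conjStarAlgAut_apply, Unitary.coe_star, star_star] at this; exact this
  have h1 : star U * (1 + A) * U
      = 1 + diagonal (RCLike.ofReal ∘ hA.1.eigenvalues) := by
    rw [mul_add, Matrix.mul_one, add_mul, hU2, hdiag]
  have h2 : (1 + A).det
      = ((1 : Matrix (Fin n) (Fin n) ℂ) + diagonal (RCLike.ofReal ∘ hA.1.eigenvalues)).det := by
    have := congrArg Matrix.det h1
    rw [det_mul, det_mul] at this
    have hdet1 : (star U).det * U.det = 1 := by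
      rw [← det_mul, hU2, det_one]
    linear_combination this - (1 + A).det * hdet1
  rw [h2]
  have h3 : (1 : Matrix (Fin n) (Fin n) ℂ) + diagonal (RCLike.ofReal ∘ hA.1.eigenvalues)
      = diagonal (fun i => 1 + (hA.1.eigenvalues i : ℂ)) := by
    rw [← diagonal_one, diagonal_add]
    rfl
  rw [h3, det_diagonal]
  have h4 : ∏ i, (1 + (hA.1.eigenvalues i : ℂ)) = ((∏ i, (1 + hA.1.eigenvalues i) : ℝ) : ℂ) := by
    push_cast
    rfl
  rw [h4, Complex.ofReal_re]

lemma herm_trace_re_eq {A : Matrix (Fin n) (Fin n) ℂ} (hA : A.IsHermitian) :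
    A.trace.re = ∑ i, hA.eigenvalues i := by
  classical
  set U : Matrix (Fin n) (Fin n) ℂ := (hA.eigenvectorUnitary : Matrix (Fin n) (Fin n) ℂ) with hU
  have hU2 : star U * U = 1 := mem_unitaryGroup_iff'.mp hA.eigenvectorUnitary.2
  have h1 : A.trace = (diagonal (RCLike.ofReal ∘ hA.eigenvalues)).trace := by
    conv_lhs => rw [hA.spectral_theorem, Unitary.conjStarAlgAut_apply]
    rw [trace_mul_cycle, ← hU, hU2, one_mul]
  rw [h1, trace_diagonal]
  rw [show ∑ i, (RCLike.ofReal ∘ hA.eigenvalues) i = ((∑ i, hA.eigenvalues i : ℝ) : ℂ) by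
    push_cast; rfl]
  exact Complex.ofReal_re _

lemma one_le_re_det_one_add {A : Matrix (Fin n) (Fin n) ℂ} (hA : A.PosSemidef) :
    1 ≤ ((1 + A).det).re := by
  rw [re_det_one_add_eq hA]
  calc (1:ℝ) = ∏ _i : Fin n, (1:ℝ) := by simp
    _ ≤ ∏ i, (1 + hA.1.eigenvalues i) :=
      Finset.prod_le_prod (fun i _ => by norm_num)
        (fun i _ => by linarith [hA.eigenvalues_nonneg i])

lemma prod_le_avg_pow (hn : 0 < n) (x : Fin n → ℝ) (hx : ∀ i, 0 ≤ x i) :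
    ∏ i, x i ≤ ((∑ i, x i) / n) ^ n := by
  have hn' : (n : ℝ) ≠ 0 := Nat.cast_ne_zero.mpr hn.ne'
  have hw : ∑ _i : Fin n, ((n : ℝ))⁻¹ = 1 := by
    simp [Finset.sum_const]
    field_simp
  have h := Real.geom_mean_le_arith_mean_weighted Finset.univ (fun _ => (n : ℝ)⁻¹) x
    (fun i _ => by positivity) hw (fun i _ => hx i)
  have hprod : (∏ i, x i ^ ((n : ℝ)⁻¹)) = (∏ i, x i) ^ ((n : ℝ)⁻¹) :=
    Real.finset_prod_rpow Finset.univ x (fun i _ => hx i) _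
  have hsum : ∑ i, (n : ℝ)⁻¹ * x i = (∑ i, x i) / n := by
    rw [← Finset.mul_sum, inv_mul_eq_div]
  rw [hprod, hsum] at h
  have hpn : 0 ≤ ∏ i, x i := Finset.prod_nonneg fun i _ => hx i
  calc ∏ i, x i = ((∏ i, x i) ^ ((n : ℝ)⁻¹)) ^ n := by
        rw [← Real.rpow_natCast ((∏ i, x i) ^ ((n : ℝ)⁻¹)) n, ← Real.rpow_mul hpn,
          inv_mul_cancel₀ hn', Real.rpow_one]
    _ ≤ ((∑ i, x i) / n) ^ n := by
        apply pow_le_pow_left₀ (Real.rpow_nonneg hpn _) h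

lemma re_det_one_add_le {A : Matrix (Fin n) (Fin n) ℂ} (hA : A.PosSemidef) (hn : 0 < n)
    {t : ℝ} (ht : A.trace.re ≤ t) :
    ((1 + A).det).re ≤ (1 + t / n) ^ n := by
  have hn' : (n : ℝ) ≠ 0 := Nat.cast_ne_zero.mpr hn.ne'
  rw [re_det_one_add_eq hA]
  have h1 : ∏ i, (1 + hA.1.eigenvalues i) ≤ ((∑ i, (1 + hA.1.eigenvalues i)) / n) ^ n :=
    prod_le_avg_pow hn _ (fun i => by linarith [hA.eigenvalues_nonneg i])
  have h2 : (∑ i, (1 + hA.1.eigenvalues i)) / n = 1 + (∑ i, hA.1.eigenvalues i) / n := by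
    rw [Finset.sum_add_distrib]
    simp [Finset.sum_const]
    field_simp
  have h3 : ∑ i, hA.1.eigenvalues i = A.trace.re := (herm_trace_re_eq hA.1).symm
  have h4 : 0 ≤ A.trace.re := psd_trace_re_nonneg hA
  refine h1.trans ?_
  rw [h2, h3]
  apply pow_le_pow_left₀
  · positivity
  · have h5 : A.trace.re / n ≤ t / n :=
      (div_le_div_iff_of_pos_right (by positivity)).mpr ht
    linarith

lemma trace_mul_re_le {Q S : Matrix (Fin n) (Fin n) ℂ} (hQ : Q.PosSemidef)
    (hS : S.PosSemidef) : ((Q * S).trace).re ≤ Q.trace.re * S.trace.re := by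
  classical
  set U : Matrix (Fin n) (Fin n) ℂ := (hS.1.eigenvectorUnitary : Matrix (Fin n) (Fin n) ℂ) with hU
  have hU1 : U * star U = 1 := mem_unitaryGroup_iff.mp hS.1.eigenvectorUnitary.2
  set D : Matrix (Fin n) (Fin n) ℂ := diagonal (RCLike.ofReal ∘ hS.1.eigenvalues) with hD
  set R : Matrix (Fin n) (Fin n) ℂ := star U * Q * U with hR
  have hRpsd : R.PosSemidef := by
    have h := hQ.conjTranspose_mul_mul_same U
    rwa [← Matrix.star_eq_conjTranspose] at h
  have h1 : (Q * S).trace = (R * D).trace := by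
    conv_lhs => rw [hS.1.spectral_theorem, Unitary.conjStarAlgAut_apply]
    rw [show Q * (U * D * star U) = (Q * U * D) * star U by
      simp only [Matrix.mul_assoc]]
    rw [trace_mul_comm]
    rw [show star U * (Q * U * D) = R * D by simp only [hR, Matrix.mul_assoc]]
  have h2 : (R * D).trace = ∑ i, R i i * ((hS.1.eigenvalues i : ℝ) : ℂ) := by
    simp [Matrix.trace, Matrix.diag, hD, Matrix.mul_diagonal, RCLike.ofReal]
  have hRtr : R.trace = Q.trace := by
    rw [hR, trace_mul_cycle, hU1, one_mul]
  have h3 : ((Q * S).trace).re = ∑ i, (R i i).re * hS.1.eigenvalues i := by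
    rw [h1, h2, Complex.re_sum]
    congr 1; ext i
    simp [Complex.mul_re]
  rw [h3]
  have h4 : ∀ i, (R i i).re * hS.1.eigenvalues i ≤ Q.trace.re * hS.1.eigenvalues i := by
    intro i
    apply mul_le_mul_of_nonneg_right _ (hS.eigenvalues_nonneg i)
    rw [← hRtr]
    exact psd_diag_re_le_trace hRpsd i
  calc ∑ i, (R i i).re * hS.1.eigenvalues i ≤ ∑ i, Q.trace.re * hS.1.eigenvalues i :=
        Finset.sum_le_sum fun i _ => h4 i
    _ = Q.trace.re * ∑ i, hS.1.eigenvalues i := by rw [← Finset.mul_sum]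
    _ = Q.trace.re * S.trace.re := by rw [← herm_trace_re_eq hS.1]

lemma one_le_detVal {N M : ℕ} (H : Matrix (Fin N) (Fin M) ℂ)
    {S : Matrix (Fin N) (Fin N) ℂ} (hS : S.PosSemidef) : 1 ≤ detVal H S :=
  one_le_re_det_one_add (hS.conjTranspose_mul_mul_same H)

open scoped MatrixOrder in
lemma detVal_le_pow {N Ne : ℕ} (hN : 0 < N) (hNe : 0 < Ne)
    (Hi : Matrix (Fin N) (Fin Ne) ℂ) {S : Matrix (Fin N) (Fin N) ℂ} (hS : S.PosSemidef)
    {t : ℝ} (ht : ((Hiᴴ * S * Hi).trace).re ≤ t) :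
    detVal Hi S ≤ (1 + t / ((min Ne N : ℕ) : ℝ)) ^ (min Ne N) := by
  rcases le_total Ne N with h | h
  · rw [min_eq_left h]
    exact re_det_one_add_le (hS.conjTranspose_mul_mul_same Hi) hNe ht
  · rw [min_eq_right h]
    set B : Matrix (Fin N) (Fin Ne) ℂ := CFC.sqrt S * Hi with hB
    have hBB : Hiᴴ * S * Hi = Bᴴ * B := by
      rw [hB, conjTranspose_mul, (CFC.sqrt_nonneg S).posSemidef.1.eq]
      calc Hiᴴ * S * Hi = Hiᴴ * (CFC.sqrt S * CFC.sqrt S) * Hi := by rw [CFC.sqrt_mul_sqrt_self S hS.nonneg]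
        _ = Hiᴴ * CFC.sqrt S * (CFC.sqrt S * Hi) := by simp only [Matrix.mul_assoc]
    have hdet : detVal Hi S = ((1 + B * Bᴴ).det).re := by
      unfold detVal
      rw [hBB, ← det_one_add_mul_comm]
    rw [hdet]
    apply re_det_one_add_le (posSemidef_self_mul_conjTranspose B) hN
    rw [trace_mul_comm B Bᴴ, ← hBB]
    exact ht

lemma detVal_upper {N M : ℕ} (hM : 0 < M) (Hs : Matrix (Fin N) (Fin M) ℂ)
    {S : Matrix (Fin N) (Fin N) ℂ} (hS : S.PosSemidef) {P : ℝ} (hSP : S.trace.re ≤ P) :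
    detVal Hs S ≤ (1 + P * ((Hs * Hsᴴ).trace).re / M) ^ M := by
  apply re_det_one_add_le (hS.conjTranspose_mul_mul_same Hs) hM
  have h1 : (Hsᴴ * S * Hs).trace = ((Hs * Hsᴴ) * S).trace := by
    rw [trace_mul_comm (Hsᴴ * S) Hs]
    simp only [Matrix.mul_assoc]
  have hQ : (Hs * Hsᴴ).PosSemidef := posSemidef_self_mul_conjTranspose Hs
  have hQtr : 0 ≤ ((Hs * Hsᴴ).trace).re := psd_trace_re_nonneg hQ
  rw [h1]
  calc (((Hs * Hsᴴ) * S).trace).re ≤ ((Hs * Hsᴴ).trace).re * S.trace.re :=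
        trace_mul_re_le hQ hS
    _ ≤ ((Hs * Hsᴴ).trace).re * P := mul_le_mul_of_nonneg_left hSP hQtr
    _ = P * ((Hs * Hsᴴ).trace).re := mul_comm _ _

end Aux

theorem stmt_8 (N M K Ne : ℕ) [NeZero K] (hN : 0 < N) (hM : 0 < M) (hNe : 0 < Ne)
    (P : ℝ) (hP : 0 < P)
    (Hs : Matrix (Fin N) (Fin M) ℂ) (H : Fin K → Matrix (Fin N) (Fin Ne) ℂ) :
    sSup {v : ℝ | ∃ Γ : Fin K → ℝ, (∀ i, 0 ≤ Γ i) ∧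
        v = ⨅ i : Fin K,
          Real.log (gTilde Hs H P Γ / (1 + Γ i / (min Ne N : ℝ)) ^ (min Ne N))} ≤
    sSup {v : ℝ | ∃ S : Matrix (Fin N) (Fin N) ℂ, S.PosSemidef ∧ S.trace.re ≤ P ∧
        v = ⨅ i : Fin K,
          (Real.log (detVal Hs S) - Real.log (detVal (H i) S))} := by
  have hK : 0 < K := Nat.pos_of_ne_zero (NeZero.ne K)
  have : Nonempty (Fin K) := ⟨⟨0, hK⟩⟩
  rw [show (min (Ne:ℝ) (N:ℝ)) = ((min Ne N : ℕ) : ℝ) from (Nat.cast_min Ne N).symm]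
  set L := min Ne N with hLdef
  have hL : 0 < L := lt_min hNe hN
  set Rs : Set ℝ := {v : ℝ | ∃ S : Matrix (Fin N) (Fin N) ℂ, S.PosSemidef ∧ S.trace.re ≤ P ∧
      v = ⨅ i : Fin K,
        (Real.log (detVal Hs S) - Real.log (detVal (H i) S))} with hRsdef
  have hdet0 : ∀ (n' : ℕ) (A : Matrix (Fin N) (Fin n') ℂ),
      detVal A (0 : Matrix (Fin N) (Fin N) ℂ) = 1 := by
    intro n' A; simp [detVal]
  have hzero : (0 : ℝ) ∈ Rs := by
    refine ⟨0, Matrix.PosSemidef.zero, by simp [hP.le], ?_⟩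
    simp only [hdet0, Real.log_one, sub_zero]
    exact (ciInf_const).symm
  set C : ℝ := (1 + P * ((Hs * Hsᴴ).trace).re / M) ^ M with hCdef
  have hCpos : (0 : ℝ) < C := by
    have h0 : (0:ℝ) ≤ ((Hs * Hsᴴ).trace).re :=
      psd_trace_re_nonneg (posSemidef_self_mul_conjTranspose Hs)
    have : (0:ℝ) < 1 + P * ((Hs * Hsᴴ).trace).re / M := by positivity
    positivity
  have hbddR : BddAbove Rs := by
    refine ⟨Real.log C, ?_⟩
    rintro v ⟨S, hS, hSP, rfl⟩
    have i0 : Fin K := ⟨0, hK⟩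
    have h1 : (⨅ i : Fin K, (Real.log (detVal Hs S) - Real.log (detVal (H i) S)))
        ≤ Real.log (detVal Hs S) - Real.log (detVal (H i0) S) :=
      ciInf_le (Set.Finite.bddBelow (Set.finite_range _)) i0
    have h2 : Real.log (detVal Hs S) ≤ Real.log C :=
      Real.log_le_log (lt_of_lt_of_le one_pos (one_le_detVal Hs hS))
        (detVal_upper hM Hs hS hSP)
    have h3 : 0 ≤ Real.log (detVal (H i0) S) :=
      Real.log_nonneg (one_le_detVal (H i0) hS)
    linarith
  have hsup0 : (0 : ℝ) ≤ sSup Rs := le_csSup hbddR hzero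
  apply Real.sSup_le _ hsup0
  rintro v ⟨Γ, hΓ, rfl⟩
  set T : Set ℝ := {x : ℝ | ∃ S : Matrix (Fin N) (Fin N) ℂ, S.PosSemidef ∧ S.trace.re ≤ P ∧
      (∀ i, (((H i).conjTranspose * S * (H i)).trace).re ≤ Γ i) ∧ x = detVal Hs S} with hTdef
  have hgT : gTilde Hs H P Γ = sSup T := rfl
  have hTone : (1 : ℝ) ∈ T := by
    refine ⟨0, Matrix.PosSemidef.zero, by simp [hP.le], fun i => ?_, (hdet0 _ _).symm⟩
    simp [hΓ i]
  have hTbdd : BddAbove T := by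
    refine ⟨C, ?_⟩
    rintro x ⟨S, hS, hSP, _, rfl⟩
    exact detVal_upper hM Hs hS hSP
  have hg1 : 1 ≤ gTilde Hs H P Γ := by
    rw [hgT]; exact le_csSup hTbdd hTone
  set g := gTilde Hs H P Γ with hgdef
  refine le_of_forall_pos_le_add ?_
  intro ε hε
  have hgε : g * Real.exp (-ε) < g := by
    have h1 : Real.exp (-ε) < 1 := Real.exp_lt_one_iff.mpr (by linarith)
    have h2 : (0:ℝ) < g := by linarith
    calc g * Real.exp (-ε) < g * 1 := by
          exact mul_lt_mul_of_pos_left h1 h2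
      _ = g := mul_one g
  obtain ⟨x, hxT, hxgt⟩ := exists_lt_of_lt_csSup ⟨1, hTone⟩ (by rw [← hgT]; exact hgε)
  obtain ⟨S, hS, hSP, hSΓ, rfl⟩ := hxT
  have hd1 : (1:ℝ) ≤ detVal Hs S := one_le_detVal Hs hS
  have hdpos : (0:ℝ) < detVal Hs S := by linarith
  have hlogx : Real.log g - ε ≤ Real.log (detVal Hs S) := by
    have hgpos : (0:ℝ) < g * Real.exp (-ε) := by positivity
    have := Real.log_le_log hgpos hxgt.le
    rwa [Real.log_mul (by positivity) (Real.exp_ne_zero _), Real.log_exp,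
      ← sub_eq_add_neg] at this
  have hw : (⨅ i : Fin K, (Real.log (detVal Hs S) - Real.log (detVal (H i) S))) ∈ Rs :=
    ⟨S, hS, hSP, rfl⟩
  have hle : (⨅ i : Fin K, Real.log (g / (1 + Γ i / (L : ℝ)) ^ L))
      ≤ (⨅ i : Fin K, (Real.log (detVal Hs S) - Real.log (detVal (H i) S))) + ε := by
    rw [← sub_le_iff_le_add]
    apply le_ciInf
    intro i
    have h1 : (⨅ i : Fin K, Real.log (g / (1 + Γ i / (L : ℝ)) ^ L))
        ≤ Real.log (g / (1 + Γ i / (L : ℝ)) ^ L) :=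
      ciInf_le (Set.Finite.bddBelow (Set.finite_range _)) i
    have hΓL : (0:ℝ) ≤ Γ i / (L : ℝ) := div_nonneg (hΓ i) (Nat.cast_nonneg L)
    have hp1 : (1:ℝ) ≤ 1 + Γ i / (L : ℝ) := by linarith
    have hppos : (0:ℝ) < (1 + Γ i / (L : ℝ)) ^ L := pow_pos (by linarith) L
    have hlogdiv : Real.log (g / (1 + Γ i / (L : ℝ)) ^ L)
        = Real.log g - Real.log ((1 + Γ i / (L : ℝ)) ^ L) :=
      Real.log_div (by linarith) (ne_of_gt hppos)
    have hdet_le : detVal (H i) S ≤ (1 + Γ i / (L : ℝ)) ^ L :=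
      detVal_le_pow hN hNe (H i) hS (hSΓ i)
    have hdi1 : (1:ℝ) ≤ detVal (H i) S := one_le_detVal (H i) hS
    have hlogdet : Real.log (detVal (H i) S) ≤ Real.log ((1 + Γ i / (L : ℝ)) ^ L) :=
      Real.log_le_log (by linarith) hdet_le
    rw [hlogdiv] at h1
    linarith
  exact hle.trans (add_le_add_left (le_csSup hbddR hw) ε)
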